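/- arXiv:2009.14400 — 3 statements merged into one kernel-verified Lean document; each statement's English description precedes it below -/
import Mathlib

section
/- Let ℚ ⊆ L ⊆ L′ be number fields with both L and L′ Galois over ℚ. Let E be a field of characteristic 0 and let M be a finite-dimensional E-linear representation of Gal(L/ℚ) with M^{Gal(L/ℚ)} = 0, regarded also as a representation of Gal(L′/ℚ) via the restriction homomorphism Gal(L′/ℚ) → Gal(L/ℚ). Then the natural inclusion 𝓞_L^× ⊆ 𝓞_{L′}^× induces an injection Hom_{E[Gal(L/ℚ)]}(M, 𝓞_L^× ⊗_ℤ E) → Hom_{E[Gal(L′/ℚ)]}(M, 𝓞_{L′}^× ⊗_ℤ E), and these two E-vector spaces have the same finite dimension. In particular, the Stark unit space U_L[ρ] ⊗ E is independent of the choice of splitting field L of the Artin representation ρ. -/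
set_option maxHeartbeats 1000000
set_option synthInstance.maxHeartbeats 400000
set_option linter.unusedSectionVars false


open NumberField TensorProduct

/-- The natural action of an automorphism `σ ∈ Gal(L/ℚ)` of a number field `L` on the unit
group of its ring of integers, written additively and `ℤ`-linearly. -/
noncomputable def galUnitsLinear (L : Type*) [Field L] [NumberField L] (σ : L ≃ₐ[ℚ] L) :
    Additive (𝓞 L)ˣ →ₗ[ℤ] Additive (𝓞 L)ˣ :=
  (MonoidHom.toAdditive
    (Units.map ((galRestrict ℤ ℚ L (𝓞 L) σ : (𝓞 L) ≃ₐ[ℤ] (𝓞 L)) : (𝓞 L) →* (𝓞 L)))).toIntLinearMap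

/-- The induced (`E`-linear) Galois action on `𝓞_L^× ⊗_ℤ E`. -/
noncomputable def galUnitsTensor (L : Type*) [Field L] [NumberField L]
    (E : Type*) [Field E] (σ : L ≃ₐ[ℚ] L) :
    (E ⊗[ℤ] Additive (𝓞 L)ˣ) →ₗ[E] (E ⊗[ℤ] Additive (𝓞 L)ˣ) :=
  LinearMap.baseChange E (galUnitsLinear L σ)

/-- The submodule of `G`-equivariant `E`-linear maps between two spaces equipped with
(`E`-linear) `G`-actions `ρ` and `ν`. -/
def equivariantHoms {E G M N : Type*} [CommSemiring E]
    [AddCommMonoid M] [Module E M] [AddCommMonoid N] [Module E N]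
    (ρ : G → M →ₗ[E] M) (ν : G → N →ₗ[E] N) : Submodule E (M →ₗ[E] N) where
  carrier := {φ | ∀ g : G, ∀ m : M, φ (ρ g m) = ν g (φ m)}
  add_mem' := by intro a b ha hb g m; simp [ha g m, hb g m]
  zero_mem' := by intro g m; simp
  smul_mem' := by intro c φ hφ g m; simp [hφ g m]

/-- The map `𝓞_L^× ⊗_ℤ E → 𝓞_{L'}^× ⊗_ℤ E` induced by the natural inclusion
`𝓞_L^× ⊆ 𝓞_{L'}^×` for an extension `L'/L` of number fields. -/
noncomputable def unitsInclTensor (L L' : Type*) [Field L] [NumberField L] [Field L']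
    [NumberField L'] [Algebra L L'] (E : Type*) [Field E] :
    (E ⊗[ℤ] Additive (𝓞 L)ˣ) →ₗ[E] (E ⊗[ℤ] Additive (𝓞 L')ˣ) :=
  LinearMap.baseChange E
    ((MonoidHom.toAdditive
      (Units.map (algebraMap (𝓞 L) (𝓞 L') : (𝓞 L) →* (𝓞 L')))).toIntLinearMap)


section StarkAux

open scoped Classical

variable (L L' : Type*) [Field L] [NumberField L] [Field L'] [NumberField L']
  [Algebra L L'] [IsScalarTower ℚ L L'] [IsGalois ℚ L] [IsGalois ℚ L']
  (E : Type*) [Field E] [CharZero E]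

lemma starkFlatE : Module.Flat ℤ E := by
  haveI : Module.Flat ℤ ℚ := IsLocalization.flat ℚ (nonZeroDivisors ℤ)
  exact Module.Flat.trans ℤ ℚ E

/-- The `ℤ`-linear inclusion of unit groups. -/
noncomputable def starkJ : Additive (𝓞 L)ˣ →ₗ[ℤ] Additive (𝓞 L')ˣ :=
  (MonoidHom.toAdditive
    (Units.map (algebraMap (𝓞 L) (𝓞 L') : (𝓞 L) →* (𝓞 L')))).toIntLinearMap

lemma unitsInclTensor_eq : unitsInclTensor L L' E = LinearMap.baseChange E (starkJ L L') := rfl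

lemma starkJ_injective : Function.Injective (starkJ L L') := by
  intro a b h
  have h2 : Function.Injective (Units.map (algebraMap (𝓞 L) (𝓞 L') : (𝓞 L) →* (𝓞 L'))) :=
    Units.map_injective (NumberField.RingOfIntegers.algebraMap.injective L L')
  exact Additive.toMul.injective (h2 (congrArg Additive.toMul h))

lemma unitsInclTensor_injective : Function.Injective (unitsInclTensor L L' E) := by
  haveI := starkFlatE E
  have h := Module.Flat.lTensor_preserves_injective_linearMap (M := E) (starkJ L L')
    (starkJ_injective L L')
  rw [unitsInclTensor_eq]
  rw [show (⇑(LinearMap.baseChange E (starkJ L L')) :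
      E ⊗[ℤ] Additive (𝓞 L)ˣ → E ⊗[ℤ] Additive (𝓞 L')ˣ)
    = ⇑(LinearMap.lTensor E (starkJ L L')) from LinearMap.baseChange_eq_ltensor _]
  exact h

lemma stark_compat_ring (σ' : L' ≃ₐ[ℚ] L') (x : 𝓞 L) :
    algebraMap (𝓞 L) (𝓞 L') (galRestrict ℤ ℚ L (𝓞 L) (AlgEquiv.restrictNormalHom L σ') x) =
      galRestrict ℤ ℚ L' (𝓞 L') σ' (algebraMap (𝓞 L) (𝓞 L') x) := by
  apply NumberField.RingOfIntegers.ext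
  have h1 : ∀ y : 𝓞 L, ((algebraMap (𝓞 L) (𝓞 L') y : 𝓞 L') : L') = algebraMap L L' (y : L) :=
    fun _ => rfl
  rw [h1]
  rw [show ((galRestrict ℤ ℚ L' (𝓞 L') σ' (algebraMap (𝓞 L) (𝓞 L') x) : 𝓞 L') : L')
        = σ' (((algebraMap (𝓞 L) (𝓞 L') x : 𝓞 L') : L')) from
      algebraMap_galRestrict_apply ℤ σ' (algebraMap (𝓞 L) (𝓞 L') x)]
  rw [h1]
  rw [show ((galRestrict ℤ ℚ L (𝓞 L) (AlgEquiv.restrictNormalHom L σ') x : 𝓞 L) : L)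
        = (AlgEquiv.restrictNormalHom L σ') ((x : L)) from
      algebraMap_galRestrict_apply ℤ (AlgEquiv.restrictNormalHom L σ') x]
  exact AlgEquiv.restrictNormal_commutes σ' L (x : L)

lemma stark_compat_units (σ' : L' ≃ₐ[ℚ] L') (u : Additive (𝓞 L)ˣ) :
    starkJ L L' (galUnitsLinear L (AlgEquiv.restrictNormalHom L σ') u) =
      galUnitsLinear L' σ' (starkJ L L' u) := by
  apply Additive.toMul.injective
  apply Units.ext
  exact stark_compat_ring L L' σ' ((Additive.toMul u : (𝓞 L)ˣ) : 𝓞 L)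

lemma stark_compat_tensor (σ' : L' ≃ₐ[ℚ] L') :
    (unitsInclTensor L L' E) ∘ₗ galUnitsTensor L E (AlgEquiv.restrictNormalHom L σ') =
      galUnitsTensor L' E σ' ∘ₗ unitsInclTensor L L' E := by
  rw [unitsInclTensor_eq]
  unfold galUnitsTensor
  rw [← LinearMap.baseChange_comp, ← LinearMap.baseChange_comp]
  exact congrArg (LinearMap.baseChange E) (LinearMap.ext (stark_compat_units L L' σ'))

lemma galUnitsLinear_one_apply (u : Additive (𝓞 L)ˣ) : galUnitsLinear L 1 u = u := by
  apply Additive.toMul.injective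
  apply Units.ext
  show (galRestrict ℤ ℚ L (𝓞 L) 1) ((Additive.toMul u : (𝓞 L)ˣ) : 𝓞 L) = _
  rw [map_one]
  rfl

lemma stark_fixed_ring (x : 𝓞 L')
    (hx : ∀ σ' : L' ≃ₐ[ℚ] L', AlgEquiv.restrictNormalHom L σ' = 1 →
      galRestrict ℤ ℚ L' (𝓞 L') σ' x = x) :
    ∃ y : 𝓞 L, algebraMap (𝓞 L) (𝓞 L') y = x := by
  haveI : IsGalois L L' := IsGalois.tower_top_of_isGalois ℚ L L'
  haveI : FiniteDimensional L L' := FiniteDimensional.right ℚ L L'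
  have hfix : ∀ τ : L' ≃ₐ[L] L', τ ((x : L')) = (x : L') := by
    intro τ
    have h1 : AlgEquiv.restrictNormalHom L (τ.restrictScalars ℚ) = 1 := by
      ext y
      apply (algebraMap L L').injective
      rw [show algebraMap L L' ((AlgEquiv.restrictNormalHom L (τ.restrictScalars ℚ)) y)
            = (τ.restrictScalars ℚ) (algebraMap L L' y) from
          AlgEquiv.restrictNormal_commutes (τ.restrictScalars ℚ) L y]
      exact τ.commutes y
    have h3 := algebraMap_galRestrict_apply ℤ (τ.restrictScalars ℚ) x
    rw [hx (τ.restrictScalars ℚ) h1] at h3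
    exact h3.symm
  have hff : IntermediateField.fixedField (⊤ : Subgroup (L' ≃ₐ[L] L')) = ⊥ :=
    OrderIso.map_bot (@IsGalois.intermediateFieldEquivSubgroup L _ L' _ _ _ ‹IsGalois L L'›).symm
  have hbot : (x : L') ∈ (⊥ : IntermediateField L L') := by
    rw [← hff]
    exact fun g => hfix g.1
  obtain ⟨y0, hy0⟩ := IntermediateField.mem_bot.mp hbot
  have hy_int : IsIntegral ℤ y0 := by
    have hint : IsIntegral ℤ (algebraMap L L' y0) := by
      rw [hy0]; exact NumberField.RingOfIntegers.isIntegral_coe x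
    exact (isIntegral_algebraMap_iff (algebraMap L L').injective).mp hint
  refine ⟨⟨y0, hy_int⟩, ?_⟩
  apply NumberField.RingOfIntegers.ext
  show algebraMap L L' y0 = (x : L')
  exact hy0

lemma stark_fixed_units (u : (𝓞 L')ˣ)
    (hu : ∀ σ' : L' ≃ₐ[ℚ] L', AlgEquiv.restrictNormalHom L σ' = 1 →
      Units.map ((galRestrict ℤ ℚ L' (𝓞 L') σ' : (𝓞 L') ≃ₐ[ℤ] (𝓞 L')) : (𝓞 L') →* (𝓞 L')) u
        = u) :
    ∃ v : (𝓞 L)ˣ, Units.map (algebraMap (𝓞 L) (𝓞 L') : (𝓞 L) →* (𝓞 L')) v = u := by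
  obtain ⟨a, ha⟩ := stark_fixed_ring L L' ((u : (𝓞 L')ˣ) : 𝓞 L')
    (fun σ' h => congrArg Units.val (hu σ' h))
  have hu' : ∀ σ' : L' ≃ₐ[ℚ] L', AlgEquiv.restrictNormalHom L σ' = 1 →
      Units.map ((galRestrict ℤ ℚ L' (𝓞 L') σ' : (𝓞 L') ≃ₐ[ℤ] (𝓞 L')) : (𝓞 L') →* (𝓞 L'))
        (u⁻¹) = u⁻¹ := by
    intro σ' h
    rw [map_inv, hu σ' h]
  obtain ⟨b, hb⟩ := stark_fixed_ring L L' (((u⁻¹ : (𝓞 L')ˣ)) : 𝓞 L')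
    (fun σ' h => congrArg Units.val (hu' σ' h))
  have hinj := NumberField.RingOfIntegers.algebraMap.injective L L'
  have hab : a * b = 1 := by
    apply hinj
    rw [map_mul, ha, hb, map_one, ← Units.val_mul]
    simp
  have hba : b * a = 1 := by
    apply hinj
    rw [map_mul, ha, hb, map_one, ← Units.val_mul]
    simp
  exact ⟨⟨a, b, hab, hba⟩, Units.ext ha⟩

/-- The `ℤ`-linear map recording the action of the subgroup fixing `L`. -/
noncomputable def starkD : Additive (𝓞 L')ˣ →ₗ[ℤ] ((L' ≃ₐ[ℚ] L') → Additive (𝓞 L')ˣ) :=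
  LinearMap.pi (fun σ' => if AlgEquiv.restrictNormalHom L σ' = 1
    then galUnitsLinear L' σ' - LinearMap.id else 0)

lemma stark_exact : Function.Exact (starkJ L L') (starkD L L') := by
  intro u
  constructor
  · intro hDu
    have key : ∀ σ' : L' ≃ₐ[ℚ] L', AlgEquiv.restrictNormalHom L σ' = 1 →
        Units.map ((galRestrict ℤ ℚ L' (𝓞 L') σ' : (𝓞 L') ≃ₐ[ℤ] (𝓞 L')) : (𝓞 L') →* (𝓞 L'))
          (Additive.toMul u) = Additive.toMul u := by
      intro σ' h
      have h1 := congrFun hDu σ'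
      simp only [starkD, LinearMap.pi_apply, if_pos h, Pi.zero_apply] at h1
      rw [LinearMap.sub_apply, LinearMap.id_apply, sub_eq_zero] at h1
      exact congrArg Additive.toMul h1
    obtain ⟨v, hv⟩ := stark_fixed_units L L' (Additive.toMul u) key
    exact ⟨Additive.ofMul v, congrArg Additive.ofMul hv⟩
  · rintro ⟨x, rfl⟩
    funext σ'
    simp only [starkD, LinearMap.pi_apply, Pi.zero_apply]
    by_cases h : AlgEquiv.restrictNormalHom L σ' = 1
    · rw [if_pos h, LinearMap.sub_apply, LinearMap.id_apply, sub_eq_zero]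
      have h2 := stark_compat_units L L' σ' x
      rw [h, galUnitsLinear_one_apply] at h2
      exact h2.symm
    · rw [if_neg h, LinearMap.zero_apply]

lemma stark_key (x : E ⊗[ℤ] Additive (𝓞 L')ˣ) (σ' : L' ≃ₐ[ℚ] L') :
    TensorProduct.piRight ℤ E E (fun _ : (L' ≃ₐ[ℚ] L') => Additive (𝓞 L')ˣ)
      (LinearMap.lTensor E (starkD L L') x) σ'
    = LinearMap.baseChange E (if AlgEquiv.restrictNormalHom L σ' = 1
        then galUnitsLinear L' σ' - LinearMap.id else 0) x := by
  induction x using TensorProduct.induction_on with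
  | zero => simp
  | tmul e f =>
    simp only [LinearMap.lTensor_tmul, TensorProduct.piRight_apply,
      TensorProduct.piRightHom_tmul, LinearMap.baseChange_tmul]
    rfl
  | add a b ha hb => simp only [map_add, Pi.add_apply, ha, hb]

lemma stark_fixed_tensor (x : E ⊗[ℤ] Additive (𝓞 L')ˣ)
    (hx : ∀ σ' : L' ≃ₐ[ℚ] L', AlgEquiv.restrictNormalHom L σ' = 1 →
      galUnitsTensor L' E σ' x = x) :
    x ∈ LinearMap.range (unitsInclTensor L L' E) := by
  haveI := starkFlatE E
  have hexact := Module.Flat.lTensor_exact E (stark_exact L L')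
  have hzero : LinearMap.lTensor E (starkD L L') x = 0 := by
    apply (TensorProduct.piRight ℤ E E (fun _ : (L' ≃ₐ[ℚ] L') => Additive (𝓞 L')ˣ)).injective
    rw [map_zero]
    funext σ'
    rw [Pi.zero_apply, stark_key L L' E x σ']
    by_cases h : AlgEquiv.restrictNormalHom L σ' = 1
    · rw [if_pos h, LinearMap.baseChange_sub, LinearMap.baseChange_id,
        LinearMap.sub_apply, LinearMap.id_apply, sub_eq_zero]
      exact hx σ' h
    · rw [if_neg h, LinearMap.baseChange_zero, LinearMap.zero_apply]
  obtain ⟨y, hy⟩ := (hexact x).mp hzero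
  refine ⟨y, ?_⟩
  rw [unitsInclTensor_eq]
  rw [show (LinearMap.baseChange E (starkJ L L')) y
      = (LinearMap.lTensor E (starkJ L L')) y from
    congrFun (LinearMap.baseChange_eq_ltensor (starkJ L L')) y]
  exact hy

end StarkAux

lemma mem_equivariantHoms {E G M N : Type*} [CommSemiring E] [AddCommMonoid M] [Module E M]
    [AddCommMonoid N] [Module E N] (ρ : G → M →ₗ[E] M) (ν : G → N →ₗ[E] N)
    (φ : M →ₗ[E] N) : φ ∈ equivariantHoms ρ ν ↔ ∀ g m, φ (ρ g m) = ν g (φ m) := Iff.rfl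

/-- Let `ℚ ⊆ L ⊆ L'` be number fields with both `L` and `L'` Galois over
`ℚ`.  Let `E` be a field of characteristic zero and `M` a finite-dimensional `E`-linear
representation of `Gal(L/ℚ)` with `M^{Gal(L/ℚ)} = 0`, regarded also as a representation of
`Gal(L'/ℚ)` via the restriction homomorphism `Gal(L'/ℚ) → Gal(L/ℚ)`.  Then the natural
inclusion `𝓞_L^× ⊆ 𝓞_{L'}^×` induces an injection
`Hom_{E[Gal(L/ℚ)]}(M, 𝓞_L^× ⊗ E) → Hom_{E[Gal(L'/ℚ)]}(M, 𝓞_{L'}^× ⊗ E)`, and these two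
`E`-vector spaces have the same (finite) dimension.  In particular the Stark unit space is
independent of the choice of splitting field. -/
theorem stark_units_independent_of_splitting_field
    (L L' : Type*) [Field L] [NumberField L] [Field L'] [NumberField L']
    [Algebra L L'] [IsScalarTower ℚ L L'] [IsGalois ℚ L] [IsGalois ℚ L']
    (E : Type*) [Field E] [CharZero E]
    (M : Type*) [AddCommGroup M] [Module E M] [FiniteDimensional E M]
    (ρ : Representation E (L ≃ₐ[ℚ] L) M)
    (htriv : ∀ m : M, (∀ σ : L ≃ₐ[ℚ] L, ρ σ m = m) → m = 0) :
    (∀ φ : M →ₗ[E] (E ⊗[ℤ] Additive (𝓞 L)ˣ),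
        φ ∈ equivariantHoms (fun σ : L ≃ₐ[ℚ] L => ρ σ)
            (fun σ : L ≃ₐ[ℚ] L => galUnitsTensor L E σ) →
        (unitsInclTensor L L' E) ∘ₗ φ ∈
          equivariantHoms
            (fun σ' : L' ≃ₐ[ℚ] L' => ρ (AlgEquiv.restrictNormalHom L σ'))
            (fun σ' : L' ≃ₐ[ℚ] L' => galUnitsTensor L' E σ')) ∧
    (∀ φ ψ : M →ₗ[E] (E ⊗[ℤ] Additive (𝓞 L)ˣ),
        φ ∈ equivariantHoms (fun σ : L ≃ₐ[ℚ] L => ρ σ)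
            (fun σ : L ≃ₐ[ℚ] L => galUnitsTensor L E σ) →
        ψ ∈ equivariantHoms (fun σ : L ≃ₐ[ℚ] L => ρ σ)
            (fun σ : L ≃ₐ[ℚ] L => galUnitsTensor L E σ) →
        (unitsInclTensor L L' E) ∘ₗ φ = (unitsInclTensor L L' E) ∘ₗ ψ → φ = ψ) ∧
    Module.finrank E
        (equivariantHoms (fun σ : L ≃ₐ[ℚ] L => ρ σ)
          (fun σ : L ≃ₐ[ℚ] L => galUnitsTensor L E σ)) =
      Module.finrank E
        (equivariantHoms
          (fun σ' : L' ≃ₐ[ℚ] L' => ρ (AlgEquiv.restrictNormalHom L σ'))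
          (fun σ' : L' ≃ₐ[ℚ] L' => galUnitsTensor L' E σ')) := by
    classical
  set A := equivariantHoms (fun σ : L ≃ₐ[ℚ] L => ρ σ)
      (fun σ : L ≃ₐ[ℚ] L => galUnitsTensor L E σ) with hA
  set B := equivariantHoms
      (fun σ' : L' ≃ₐ[ℚ] L' => ρ (AlgEquiv.restrictNormalHom L σ'))
      (fun σ' : L' ≃ₐ[ℚ] L' => galUnitsTensor L' E σ') with hB
  have part1 : ∀ φ : M →ₗ[E] (E ⊗[ℤ] Additive (𝓞 L)ˣ),
      φ ∈ A → (unitsInclTensor L L' E) ∘ₗ φ ∈ B := by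
    intro φ hφ
    rw [hB, mem_equivariantHoms]
    intro σ' m
    rw [LinearMap.comp_apply, LinearMap.comp_apply]
    rw [(mem_equivariantHoms _ _ _).mp hφ (AlgEquiv.restrictNormalHom L σ') m]
    exact LinearMap.congr_fun (stark_compat_tensor L L' E σ') (φ m)
  have hinj := unitsInclTensor_injective L L' E
  have part2 : ∀ φ ψ : M →ₗ[E] (E ⊗[ℤ] Additive (𝓞 L)ˣ),
      φ ∈ A → ψ ∈ A →
      (unitsInclTensor L L' E) ∘ₗ φ = (unitsInclTensor L L' E) ∘ₗ ψ → φ = ψ :=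
    fun φ ψ _ _ h => LinearMap.ext fun m => hinj (LinearMap.congr_fun h m)
  refine ⟨part1, part2, ?_⟩
  let T : A →ₗ[E] B :=
    { toFun := fun φ => ⟨unitsInclTensor L L' E ∘ₗ φ.1, part1 φ.1 φ.2⟩
      map_add' := fun a b => Subtype.ext (by
        show unitsInclTensor L L' E ∘ₗ ((a : M →ₗ[E] _) + (b : M →ₗ[E] _)) = _
        rw [LinearMap.comp_add]; rfl)
      map_smul' := fun c a => Subtype.ext (LinearMap.ext fun m => by
        show unitsInclTensor L L' E ((c • (a : M →ₗ[E] _)) m) = _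
        simp) }
  have hTinj : Function.Injective T := by
    intro a b h
    exact Subtype.ext (part2 a.1 b.1 a.2 b.2 (congrArg Subtype.val h))
  have hTsurj : Function.Surjective T := by
    rintro ⟨ψ, hψ⟩
    have hψ' := (mem_equivariantHoms _ _ _).mp hψ
    have hmem : ∀ m : M, ψ m ∈ LinearMap.range (unitsInclTensor L L' E) := by
      intro m
      apply stark_fixed_tensor L L' E
      intro σ' h1
      have h2 := hψ' σ' m
      rw [h1, map_one ρ, Module.End.one_apply] at h2
      exact h2.symm
    let e := LinearEquiv.ofInjective (unitsInclTensor L L' E) hinj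
    let φ : M →ₗ[E] (E ⊗[ℤ] Additive (𝓞 L)ˣ) :=
      e.symm.toLinearMap ∘ₗ (ψ.codRestrict (LinearMap.range (unitsInclTensor L L' E)) hmem)
    have key : ∀ z : LinearMap.range (unitsInclTensor L L' E),
        unitsInclTensor L L' E (e.symm z) = (z : E ⊗[ℤ] Additive (𝓞 L')ˣ) := by
      intro z
      rw [← LinearEquiv.ofInjective_apply (unitsInclTensor L L' E) (h := hinj)]
      rw [LinearEquiv.apply_symm_apply]
    have hφψ : (unitsInclTensor L L' E) ∘ₗ φ = ψ := by
      apply LinearMap.ext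
      intro m
      have h4 := key ((ψ.codRestrict (LinearMap.range (unitsInclTensor L L' E)) hmem) m)
      simpa [φ] using h4
    have hφmem : φ ∈ A := by
      rw [hA, mem_equivariantHoms]
      intro σ m
      obtain ⟨σ', hσ'⟩ := AlgEquiv.restrictNormalHom_surjective L' (F := ℚ) (K₁ := L) σ
      apply hinj
      calc unitsInclTensor L L' E (φ (ρ σ m))
          = ψ (ρ σ m) := LinearMap.congr_fun hφψ (ρ σ m)
        _ = ψ (ρ (AlgEquiv.restrictNormalHom L σ') m) := by rw [hσ']
        _ = galUnitsTensor L' E σ' (ψ m) := hψ' σ' m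
        _ = galUnitsTensor L' E σ' (unitsInclTensor L L' E (φ m)) :=
            congrArg (galUnitsTensor L' E σ') (LinearMap.congr_fun hφψ m).symm
        _ = unitsInclTensor L L' E (galUnitsTensor L E σ (φ m)) := by
            have h5 := LinearMap.congr_fun (stark_compat_tensor L L' E σ') (φ m)
            rw [hσ'] at h5
            exact h5.symm
    exact ⟨⟨φ, hφmem⟩, Subtype.ext hφψ⟩
  exact LinearEquiv.finrank_eq (LinearEquiv.ofBijective T ⟨hTinj, hTsurj⟩)
end

section
/- Let O be a discrete valuation ring with uniformizer π, and let σ be a ring automorphism of O with σ(π) = −π such that every element of O is congruent modulo (π) to a σ-fixed element (i.e., for each x ∈ O there exists y ∈ O with σ(y) = y and x − y ∈ πO). Let A be a commutative group, let ξ : O^× → A be a group homomorphism, and define χ : O^× → A by χ(u) = ξ(u) · ξ(σ(u))⁻¹. For n ≥ 1 let U^n := {u ∈ O^× : u − 1 ∈ πⁿO}, and set U^0 := O^×. Then for every odd integer i ≥ 1: if χ(u) = 1 for all u ∈ U^i, then χ(u) = 1 for all u ∈ U^{i−1}. -/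
private lemma aux_unit_one_add {O : Type*} [CommRing O] [IsLocalRing O]
    {x : O} (hx : x ∈ IsLocalRing.maximalIdeal O) : IsUnit (1 + x) := by
  by_contra hu
  have h1 : (1 : O) ∈ IsLocalRing.maximalIdeal O := by
    have hm : (1 : O) + x ∈ IsLocalRing.maximalIdeal O := hu
    simpa using (IsLocalRing.maximalIdeal O).sub_mem hm hx
  exact (IsLocalRing.maximalIdeal.isMaximal O).ne_top
    (Ideal.eq_top_of_isUnit_mem _ h1 isUnit_one)

/-- Let `O` be a discrete valuation ring with uniformizer `π`, and let `σ`
be a ring automorphism of `O` with `σ π = −π` such that every element of `O` is congruent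
modulo `(π)` to a `σ`-fixed element. Let `A` be a commutative group, `ξ : Oˣ →* A` a
homomorphism, and `χ u = ξ u · ξ(σ u)⁻¹`.  For `n ≥ 1` let `Uⁿ = {u ∈ Oˣ : u − 1 ∈ πⁿO}`
(and `U⁰ = Oˣ`; note `u - 1 ∈ (π^0) = (1)` holds for every unit).  Then for every odd
`i ≥ 1`: if `χ` is trivial on `Uⁱ`, then `χ` is trivial on `U^{i−1}`. -/
theorem character_trivial_step_down
    {O : Type*} [CommRing O] [IsDomain O] [IsDiscreteValuationRing O]
    (π : O) (hπ : Irreducible π)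
    (σ : O ≃+* O) (hσπ : σ π = -π)
    (hres : ∀ x : O, ∃ y : O, σ y = y ∧ x - y ∈ Ideal.span {π})
    {A : Type*} [CommGroup A] (ξ : Oˣ →* A)
    (i : ℕ) (hi : 1 ≤ i) (hodd : Odd i)
    (h : ∀ u : Oˣ, ((u : O) - 1) ∈ Ideal.span {π ^ i} →
      ξ u * (ξ (Units.map σ.toRingHom.toMonoidHom u))⁻¹ = 1) :
    ∀ u : Oˣ, ((u : O) - 1) ∈ Ideal.span {π ^ (i - 1)} →
      ξ u * (ξ (Units.map σ.toRingHom.toMonoidHom u))⁻¹ = 1 := by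
  intro u hu
  have hπmax : π ∈ IsLocalRing.maximalIdeal O := hπ.not_isUnit
  have hspanle : Ideal.span {π} ≤ IsLocalRing.maximalIdeal O := by
    rw [Ideal.span_le]; simpa using hπmax
  -- produce a σ-fixed unit w congruent to u mod π^i
  obtain ⟨w, hw, hmem⟩ :
      ∃ w : Oˣ, σ (w : O) = (w : O) ∧ (u : O) - (w : O) ∈ Ideal.span {π ^ i} := by
    rcases eq_or_lt_of_le hi with h1 | h2
    · -- i = 1, i - 1 = 0
      obtain ⟨y, hy, hxy⟩ := hres (u : O)
      have hyu : IsUnit y := by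
        by_contra hy'
        have hyn : y ∈ IsLocalRing.maximalIdeal O := hy'
        have hum : (u : O) ∈ IsLocalRing.maximalIdeal O := by
          have := (IsLocalRing.maximalIdeal O).add_mem (hspanle hxy) hyn
          simpa using this
        exact hum u.isUnit
      refine ⟨hyu.unit, by simpa using hy, ?_⟩
      have : (u : O) - y ∈ Ideal.span {π ^ i} := by
        rw [← h1]; simpa using hxy
      simpa using this
    · -- i ≥ 2
      obtain ⟨x, hx⟩ := Ideal.mem_span_singleton'.mp hu
      obtain ⟨y, hy, hxy⟩ := hres x
      have heven : Even (i - 1) := Nat.Odd.sub_odd hodd odd_one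
      have hw0u : IsUnit (1 + π ^ (i - 1) * y) := by
        refine aux_unit_one_add (Ideal.mul_mem_right _ _ ?_)
        have : π ^ (i - 1) ∈ Ideal.span {π} := by
          rw [Ideal.mem_span_singleton]
          exact dvd_pow_self π (by omega)
        exact hspanle this
      refine ⟨hw0u.unit, ?_, ?_⟩
      · have : σ (1 + π ^ (i - 1) * y) = 1 + π ^ (i - 1) * y := by
          rw [map_add, map_one, map_mul, map_pow, hσπ, hy, heven.neg_pow]
        simpa using this
      · obtain ⟨t, ht⟩ := Ideal.mem_span_singleton.mp hxy
        have hcoe : (hw0u.unit : O) = 1 + π ^ (i - 1) * y := rfl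
        rw [hcoe, Ideal.mem_span_singleton]
        refine ⟨t, ?_⟩
        have hpow : π ^ i = π ^ (i - 1) * π := by
          rw [← pow_succ]; congr 1; omega
        calc (u : O) - (1 + π ^ (i - 1) * y)
            = (x * π ^ (i - 1) + 1) - (1 + π ^ (i - 1) * y) := by linear_combination -hx
          _ = π ^ (i - 1) * (x - y) := by ring
          _ = π ^ (i - 1) * (π * t) := by rw [ht]
          _ = π ^ i * t := by rw [hpow]; ring
  -- now conclude via the "character" χ
  let f := σ.toRingHom.toMonoidHom
  let χ : Oˣ →* A := ξ * (ξ.comp (Units.map f))⁻¹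
  have hχ : ∀ v : Oˣ, χ v = ξ v * (ξ (Units.map f v))⁻¹ := fun _ => rfl
  have hwmap : Units.map f w = w := Units.ext hw
  have hχw : χ w = 1 := by rw [hχ, hwmap, mul_inv_cancel]
  have hv : ((u * w⁻¹ : Oˣ) : O) - 1 ∈ Ideal.span {π ^ i} := by
    have hcoe : ((u * w⁻¹ : Oˣ) : O) - 1 = ((u : O) - w) * ((w⁻¹ : Oˣ) : O) := by
      rw [Units.val_mul]
      linear_combination w.mul_inv
    rw [hcoe]
    exact Ideal.mul_mem_right _ _ hmem
  have hχv : χ (u * w⁻¹) = 1 := h (u * w⁻¹) hv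
  have : χ u = 1 := by
    have : χ ((u * w⁻¹) * w) = 1 := by rw [map_mul, hχv, hχw, one_mul]
    simpa using this
  exact this
end

section
/- Let O be a discrete valuation ring with uniformizer π, and let σ be a ring automorphism of O with σ(π) = −π such that every element of O is congruent modulo (π) to a σ-fixed element. Let A be a commutative group, ξ : O^× → A a group homomorphism, and χ(u) := ξ(u) · ξ(σ(u))⁻¹. For n ≥ 1 let U^n := {u ∈ O^× : u − 1 ∈ πⁿO} and U^0 := O^×. Suppose there exists some n ≥ 0 such that χ is trivial on U^n. Then the least n ≥ 0 such that χ(u) = 1 for all u ∈ U^n (the conductor exponent a(χ)) is an even integer. -/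
/-- Let `O` be a discrete valuation ring with uniformizer `π`, and let `σ`
be a ring automorphism of `O` with `σ π = −π` such that every element of `O` is congruent
modulo `(π)` to a `σ`-fixed element. Let `A` be a commutative group, `ξ : Oˣ →* A` a
homomorphism, and `χ u = ξ u · ξ(σ u)⁻¹`.  For `n ≥ 0` let `Uⁿ = {u ∈ Oˣ : u − 1 ∈ πⁿO}`
(so `U⁰ = Oˣ`).  If `χ` is trivial on some `Uⁿ`, then the least `n ≥ 0` such that `χ` is
trivial on `Uⁿ` — the conductor exponent `a(χ)` — is even. -/
theorem conductor_exponent_even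
    {O : Type*} [CommRing O] [IsDomain O] [IsDiscreteValuationRing O]
    (π : O) (hπ : Irreducible π)
    (σ : O ≃+* O) (hσπ : σ π = -π)
    (hres : ∀ x : O, ∃ y : O, σ y = y ∧ x - y ∈ Ideal.span {π})
    {A : Type*} [CommGroup A] (ξ : Oˣ →* A)
    (hcond : ∃ n : ℕ, ∀ u : Oˣ, ((u : O) - 1) ∈ Ideal.span {π ^ n} →
      ξ u * (ξ (Units.map σ.toRingHom.toMonoidHom u))⁻¹ = 1) :
    Even (sInf {n : ℕ | ∀ u : Oˣ, ((u : O) - 1) ∈ Ideal.span {π ^ n} →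
      ξ u * (ξ (Units.map σ.toRingHom.toMonoidHom u))⁻¹ = 1}) := by
  set χ : Oˣ → A := fun u => ξ u * (ξ (Units.map σ.toRingHom.toMonoidHom u))⁻¹ with hχ
  set S : Set ℕ := {n : ℕ | ∀ u : Oˣ, ((u : O) - 1) ∈ Ideal.span {π ^ n} → χ u = 1} with hSdef
  show Even (sInf S)
  by_contra hodd
  rw [Nat.not_even_iff_odd] at hodd
  have hne : S.Nonempty := hcond
  have hmem : sInf S ∈ S := Nat.sInf_mem hne
  set n := sInf S with hn
  clear_value n
  obtain ⟨k, hk⟩ := hodd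
  have hn1 : n ≥ 1 := by omega
  have hχmul : ∀ a b : Oˣ, χ (a * b) = χ a * χ b := by
    intro a b
    simp only [hχ, map_mul, mul_inv]
    exact mul_mul_mul_comm _ _ _ _
  -- key step: triviality on U^(n-1)
  have hstep : n - 1 ∈ S := by
    intro u hu
    rw [Ideal.mem_span_singleton] at hu
    obtain ⟨x, hx⟩ := hu
    obtain ⟨y, hyfix, hyz⟩ := hres x
    rw [Ideal.mem_span_singleton] at hyz
    obtain ⟨z, hz⟩ := hyz
    have hx' : x = y + π * z := by linear_combination hz
    set w0 : O := 1 + π ^ (n - 1) * y with hw0def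
    have huw : (u : O) = w0 + π ^ n * z := by
      have hpow : π ^ n = π ^ (n - 1) * π := by
        rw [← pow_succ]; congr 1; omega
      have : (u : O) - 1 = π ^ (n - 1) * x := hx
      rw [hx'] at this
      rw [hpow]
      ring_nf
      ring_nf at this ⊢
      linear_combination this
    have hσw0 : σ w0 = w0 := by
      have hneg : (-π) ^ (n - 1) = π ^ (n - 1) := by
        have : Even (n - 1) := ⟨k, by omega⟩
        exact this.neg_pow π
      simp [hw0def, map_add, map_mul, map_one, map_pow, hσπ, hyfix, hneg]
    have hw0unit : IsUnit w0 := by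
      by_contra h
      have h1 : w0 ∈ IsLocalRing.maximalIdeal O := h
      have hπm : π ∈ IsLocalRing.maximalIdeal O := hπ.not_isUnit
      have h2 : π ^ n * z ∈ IsLocalRing.maximalIdeal O :=
        Ideal.mul_mem_right _ _ (Ideal.pow_mem_of_mem _ hπm n (by omega))
      have : (u : O) ∈ IsLocalRing.maximalIdeal O := by rw [huw]; exact Ideal.add_mem _ h1 h2
      exact this u.isUnit
    obtain ⟨w, hw⟩ := hw0unit
    have hv : ((u * w⁻¹ : Oˣ) : O) - 1 ∈ Ideal.span {π ^ n} := by
      rw [Ideal.mem_span_singleton]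
      refine ⟨z * ((w⁻¹ : Oˣ) : O), ?_⟩
      have hwin : (w : O) * ((w⁻¹ : Oˣ) : O) = 1 := by
        rw [← Units.val_mul, mul_inv_cancel, Units.val_one]
      push_cast
      calc (u : O) * ((w⁻¹ : Oˣ) : O) - 1
          = ((u : O) - (w : O)) * ((w⁻¹ : Oˣ) : O) + ((w : O) * ((w⁻¹ : Oˣ) : O) - 1) := by ring
        _ = π ^ n * (z * ((w⁻¹ : Oˣ) : O)) := by
            rw [hwin, hw, huw]; ring
    have hχv : χ (u * w⁻¹) = 1 := hmem _ hv
    have hχw : χ w = 1 := by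
      have hfix : Units.map σ.toRingHom.toMonoidHom w = w := by
        ext
        rw [Units.coe_map]
        show σ (w : O) = w
        rw [hw, hσw0]
      show ξ w * (ξ (Units.map σ.toRingHom.toMonoidHom w))⁻¹ = 1
      rw [hfix]
      simp
    have hwu : w * (u * w⁻¹) = u := by
      rw [mul_comm w (u * w⁻¹), inv_mul_cancel_right]
    calc χ u = χ (w * (u * w⁻¹)) := by rw [hwu]
      _ = χ w * χ (u * w⁻¹) := hχmul _ _
      _ = 1 := by rw [hχv, hχw, one_mul]
  have := Nat.sInf_le hstep
  omega
end
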